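/- Let V be a module over a commutative ring Z acting by a character χ₀ on its cohomology in the following sense: V = ⊕_{i∈I} V_i is a (topological) direct sum of subcomplexes of a complex (R^•, d) of Z-modules, where each summand V_i is annihilated by (A − χ_i(A)) for characters χ_i ≠ χ₀, and there exist finitely many elements A_1,…,A_m ∈ Z and ε > 0 with: for each i there is j(i) such that |χ_i(A_{j(i)}) − χ₀(A_{j(i)})| ≥ ε. If every cohomology class [α] of (R^•, d) satisfies (A − χ₀(A))[α] = 0 for all A ∈ Z, then H^p(R^•, d) = 0 for all p. -/

import Mathlib

open DirectSum

section Aux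

variable {I : Type*} [DecidableEq I]

/-- Projection onto the `i`-th summand of an internal direct sum. -/
noncomputable def projAux {N : Type*} [AddCommGroup N] [Module ℂ N]
    (V : I → Submodule ℂ N) (hV : DirectSum.IsInternal V) (i : I) : N →ₗ[ℂ] N :=
  (V i).subtype ∘ₗ (DirectSum.component ℂ I (fun i => V i) i) ∘ₗ
    (LinearEquiv.ofBijective (DirectSum.coeLinearMap V) hV).symm.toLinearMap

lemma projAux_apply {N : Type*} [AddCommGroup N] [Module ℂ N]
    (V : I → Submodule ℂ N) (hV : DirectSum.IsInternal V) (i : I) (x : N) :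
    projAux V hV i x
      = (((LinearEquiv.ofBijective (DirectSum.coeLinearMap V) hV).symm x) i : N) := rfl

lemma projAux_mem {N : Type*} [AddCommGroup N] [Module ℂ N]
    (V : I → Submodule ℂ N) (hV : DirectSum.IsInternal V) (i : I) (x : N) :
    projAux V hV i x ∈ V i :=
  (((LinearEquiv.ofBijective (DirectSum.coeLinearMap V) hV).symm x) i).2

lemma sum_projAux {N : Type*} [AddCommGroup N] [Module ℂ N]
    (V : I → Submodule ℂ N) (hV : DirectSum.IsInternal V) (x : N) :
    ∃ t : Finset I, ∑ i ∈ t, projAux V hV i x = x := by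
  classical
  set e := LinearEquiv.ofBijective (DirectSum.coeLinearMap V) hV with he
  set y := e.symm x with hy
  refine ⟨y.support, ?_⟩
  conv_rhs => rw [← e.apply_symm_apply x]
  have h1 : e (e.symm x) = DirectSum.coeLinearMap V y := rfl
  rw [h1]
  conv_rhs => rw [← DirectSum.sum_support_of y]
  rw [map_sum]
  refine Finset.sum_congr rfl fun i hi => ?_
  rw [projAux_apply, DirectSum.coeLinearMap_of, ← hy]

lemma projAux_comm {N N' : Type*} [AddCommGroup N] [Module ℂ N]
    [AddCommGroup N'] [Module ℂ N']
    (V : I → Submodule ℂ N) (W : I → Submodule ℂ N')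
    (hV : DirectSum.IsInternal V) (hW : DirectSum.IsInternal W)
    (f : N →ₗ[ℂ] N') (hf : ∀ i, ∀ x ∈ V i, f x ∈ W i) (i : I) (x : N) :
    projAux W hW i (f x) = f (projAux V hV i x) := by
  classical
  set F : ∀ i, V i →ₗ[ℂ] W i := fun i => f.restrict (hf i) with hF
  have gk : ∀ y : ⨁ i, V i,
      DirectSum.coeLinearMap W (DFinsupp.mapRange.linearMap F y)
        = f (DirectSum.coeLinearMap V y) := by
    intro y
    induction y using DirectSum.induction_on with
    | zero => simp
    | of k v =>
      have h5 : DFinsupp.mapRange.linearMap F (DirectSum.of (fun i => V i) k v)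
          = DirectSum.of (fun i => W i) k (F k v) := by
        refine DFinsupp.ext fun l => ?_
        rw [show (DFinsupp.mapRange.linearMap F (DirectSum.of (fun i => V i) k v)) l
            = F l ((DirectSum.of (fun i => V i) k v) l)
            from DFinsupp.mapRange_apply (fun i x => F i x) (fun i => map_zero (F i)) _ l]
        by_cases h : k = l
        · subst h; rw [DirectSum.of_eq_same, DirectSum.of_eq_same]
        · rw [DirectSum.of_eq_of_ne _ _ _ (Ne.symm h), DirectSum.of_eq_of_ne _ _ _ (Ne.symm h), map_zero]
      rw [h5, DirectSum.coeLinearMap_of, DirectSum.coeLinearMap_of]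
      simp [F, LinearMap.restrict_apply]
    | add y₁ y₂ ih1 ih2 => simp only [map_add, ih1, ih2]
  set eV := LinearEquiv.ofBijective (DirectSum.coeLinearMap V) hV with heV
  set eW := LinearEquiv.ofBijective (DirectSum.coeLinearMap W) hW with heW
  have h2 : eW.symm (f x) = DFinsupp.mapRange.linearMap F (eV.symm x) := by
    rw [LinearEquiv.symm_apply_eq]
    rw [show eW (DFinsupp.mapRange.linearMap F (eV.symm x))
        = DirectSum.coeLinearMap W (DFinsupp.mapRange.linearMap F (eV.symm x)) from rfl]
    rw [gk]
    congr 1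
    exact (eV.apply_symm_apply x).symm
  rw [projAux_apply, projAux_apply, h2]
  rw [show (DFinsupp.mapRange.linearMap F (eV.symm x)) i = F i ((eV.symm x) i)
      from DFinsupp.mapRange_apply (fun i x => F i x) (fun i => map_zero (F i)) _ i]
  simp [F, LinearMap.restrict_apply]
  rfl

end Aux

/-- Let `(R•, d)` be a complex of complex vector spaces on which a
commutative ring `Z` acts (commuting with `d`), decomposing as a direct sum of
`Z`-stable subcomplexes `V i` on which `Z` acts through characters `χ i`.  Suppose there
are finitely many elements `A 0, …, A (m-1)` of `Z` and `ε > 0` separating every `χ i`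
from a fixed character `χ₀` (`∃ j, |χ i (A j) - χ₀ (A j)| ≥ ε`).  If every cohomology
class `[α]` satisfies `(A - χ₀(A))[α] = 0` for all `A ∈ Z`, then `H^p(R•, d) = 0`
for all `p`. -/


theorem stmt17 {R : ℕ → Type*} [∀ p, AddCommGroup (R p)] [∀ p, Module ℂ (R p)]
    {Z : Type*} [CommRing Z]
    (d : ∀ p, R p →ₗ[ℂ] R (p + 1)) (hdd : ∀ p, (d (p + 1)).comp (d p) = 0)
    (φ : ∀ p, Z →+* Module.End ℂ (R p))
    (hφd : ∀ p z, (d p).comp (φ p z) = (φ (p + 1) z).comp (d p))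
    {I : Type*} [DecidableEq I] (V : I → ∀ p, Submodule ℂ (R p))
    (hinternal : ∀ p, DirectSum.IsInternal fun i => V i p)
    (hVd : ∀ i p, ∀ x ∈ V i p, d p x ∈ V i (p + 1))
    (χ : I → Z →+* ℂ) (χ₀ : Z →+* ℂ)
    (hchar : ∀ i p z, ∀ x ∈ V i p, φ p z x = χ i z • x)
    (m : ℕ) (A : Fin m → Z) (ε : ℝ) (hε : 0 < ε)
    (hsep : ∀ i, ∃ j, ε ≤ ‖χ i (A j) - χ₀ (A j)‖)
    -- every cohomology class is annihilated by `A - χ₀(A)` for all `A ∈ Z`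
    (hcoc0 : ∀ α : R 0, d 0 α = 0 → ∀ z : Z, φ 0 z α - χ₀ z • α = 0)
    (hcoc : ∀ p (α : R (p + 1)), d (p + 1) α = 0 → ∀ z : Z,
      ∃ β : R p, φ (p + 1) z α - χ₀ z • α = d p β) :
    (∀ α : R 0, d 0 α = 0 → α = 0) ∧
    (∀ p (α : R (p + 1)), d (p + 1) α = 0 → ∃ γ : R p, d p γ = α) := by
  classical
  -- the Z action commutes with projections and acts by χ i on the i-th component
  have hφV : ∀ p z i, ∀ x ∈ V i p, φ p z x ∈ V i p := by
    intro p z i x hx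
    rw [hchar i p z x hx]
    exact Submodule.smul_mem _ _ hx
  have hπφ : ∀ p z i (x : R p),
      projAux (fun i => V i p) (hinternal p) i (φ p z x)
        = χ i z • projAux (fun i => V i p) (hinternal p) i x := by
    intro p z i x
    rw [projAux_comm (fun i => V i p) (fun i => V i p) (hinternal p) (hinternal p)
      (φ p z) (hφV p z) i x]
    exact hchar i p z _ (projAux_mem (fun i => V i p) (hinternal p) i x)
  -- separation: pick the witnesses
  choose j hj using hsep
  have hne : ∀ i, χ i (A (j i)) - χ₀ (A (j i)) ≠ 0 := by
    intro i h
    have := hj i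
    rw [h] at this
    simp at this
    linarith
  constructor
  · -- degree 0
    intro α hα
    have hzero : ∀ i, projAux (fun i => V i 0) (hinternal 0) i α = 0 := by
      intro i
      have h1 := hcoc0 α hα (A (j i))
      have h2 : projAux (fun i => V i 0) (hinternal 0) i
          (φ 0 (A (j i)) α - χ₀ (A (j i)) • α) = 0 := by rw [h1]; simp
      rw [map_sub, map_smul, hπφ] at h2
      have h3 : (χ i (A (j i)) - χ₀ (A (j i))) •
          projAux (fun i => V i 0) (hinternal 0) i α = 0 := by
        rw [sub_smul]; exact h2
      rcases smul_eq_zero.mp h3 with h | h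
      · exact absurd h (hne i)
      · exact h
    obtain ⟨t, ht⟩ := sum_projAux (fun i => V i 0) (hinternal 0) α
    rw [← ht]
    exact Finset.sum_eq_zero fun i _ => hzero i
  · -- positive degrees
    intro p α hα
    choose β hβ using hcoc p α hα
    obtain ⟨t, ht⟩ := sum_projAux (fun i => V i (p+1)) (hinternal (p+1)) α
    refine ⟨∑ i ∈ t, (χ i (A (j i)) - χ₀ (A (j i)))⁻¹ •
      projAux (fun i => V i p) (hinternal p) i (β (A (j i))), ?_⟩
    rw [map_sum]
    have hterm : ∀ i, d p ((χ i (A (j i)) - χ₀ (A (j i)))⁻¹ •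
        projAux (fun i => V i p) (hinternal p) i (β (A (j i))))
        = projAux (fun i => V i (p+1)) (hinternal (p+1)) i α := by
      intro i
      set z := A (j i) with hz
      rw [map_smul]
      have hdπ : d p (projAux (fun i => V i p) (hinternal p) i (β z))
          = projAux (fun i => V i (p+1)) (hinternal (p+1)) i (d p (β z)) :=
        (projAux_comm (fun i => V i p) (fun i => V i (p+1)) (hinternal p)
          (hinternal (p+1)) (d p) (fun i x hx => hVd i p x hx) i (β z)).symm
      rw [hdπ, ← hβ z, map_sub, map_smul, hπφ, ← sub_smul, smul_smul,
        inv_mul_cancel₀ (hne i), one_smul]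
    rw [Finset.sum_congr rfl fun i _ => hterm i]
    exact ht
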